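/- Let F ≡ Q₁x₁. … Qₙxₙ. E(x₁,…,xₙ) be a closed quantified Boolean formula in prenex form, with Qᵢ ∈ {∀,∃} and E a Boolean combination of x₁,…,xₙ. Let φ be the PTLTL^FO formula T₁Q₁x₁:p₁. … TₙQₙxₙ:pₙ. E(true(x₁),…,true(xₙ)), where Tᵢ = G⁻¹ if Qᵢ = ∀ and Tᵢ = F⁻¹ if Qᵢ = ∃, with distinct unary uninterpreted predicates p₁,…,pₙ and a further unary uninterpreted predicate true. Let h be the history of 2n sessions {pₙ(0), true(1)}; {pₙ(1), true(1)}; … ; {p₁(0), true(1)}; {p₁(1), true(1)} (in that order). Then h is trace-like, and F evaluates to true if and only if h ⊨ φ. -/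

import Mathlib

/-- Terms: variables, constants, and applications of interpreted function symbols
(function symbols are named by natural numbers). -/
inductive Tm (C : Type) : Type where
  | var : ℕ → Tm C
  | const : C → Tm C
  | func : ℕ → List (Tm C) → Tm C

/-- Evaluation of a term under an interpretation `F` of the function symbols and an
environment (variable assignment) `ρ`. -/
def Tm.eval {C : Type} (F : ℕ → List C → C) (ρ : ℕ → C) : Tm C → C
  | .var x => ρ x
  | .const c => c
  | .func f args => F f (args.attach.map fun t => Tm.eval F ρ t.1)
  decreasing_by simp_wf; have := List.sizeOf_lt_of_mem t.2; omega

/-- Variables occurring in a term. -/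
def Tm.fv {C : Type} : Tm C → List ℕ
  | .var x => [x]
  | .const _ => []
  | .func _ args => args.attach.flatMap fun t => Tm.fv t.1
  decreasing_by simp_wf; have := List.sizeOf_lt_of_mem t.2; omega

/-- PTLTL^FO formulas: uninterpreted predicate atoms, interpreted relation atoms,
conjunction, negation, "previous" X⁻¹, "since" S, and the guarded universal
quantifier `all xs p ψ` (∀(x₁,…,xₙ):p. ψ). -/
inductive Fm (C : Type) : Type where
  | atom : ℕ → List (Tm C) → Fm C
  | rel : ℕ → List (Tm C) → Fm C
  | and : Fm C → Fm C → Fm C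
  | not : Fm C → Fm C
  | prev : Fm C → Fm C
  | since : Fm C → Fm C → Fm C
  | all : List ℕ → ℕ → Fm C → Fm C

/-- Free variables of a formula. -/
def Fm.fv {C : Type} : Fm C → List ℕ
  | .atom _ ts => ts.flatMap Tm.fv
  | .rel _ ts => ts.flatMap Tm.fv
  | .and a b => a.fv ++ b.fv
  | .not a => a.fv
  | .prev a => a.fv
  | .since a b => a.fv ++ b.fv
  | .all xs _ a => a.fv.filter (fun v => v ∉ xs)

/-- A formula is closed if it has no free variables. -/
def Fm.Closed {C : Type} (φ : Fm C) : Prop := φ.fv = []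

/-- A session is a finite set of events `p(c₁,…,cₙ)`. -/
abbrev Session (C : Type) := Finset (ℕ × List C)

/-- A history is a (finite) list of sessions. -/
abbrev History (C : Type) := List (Session C)

/-- Update an environment on the list of variables `xs` with the list of values `cs`. -/
def updEnv {C : Type} (ρ : ℕ → C) (xs : List ℕ) (cs : List C) : ℕ → C :=
  fun v => ((xs.zip cs).lookup v).getD (ρ v)

/-- The forcing relation `(h,i) ⊨ φ` (1-based session index `i`, environment `ρ`),
with interpretation `F` of function symbols and `R` of relation symbols. -/
def Sat {C : Type} (F : ℕ → List C → C) (R : ℕ → List C → Bool) (h : History C) :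
    ℕ → (ℕ → C) → Fm C → Prop
  | i, ρ, .atom p ts => (p, ts.map (Tm.eval F ρ)) ∈ h.getD (i - 1) ∅
  | i, ρ, .rel r ts => R r (ts.map (Tm.eval F ρ)) = true
  | i, ρ, .and a b => Sat F R h i ρ a ∧ Sat F R h i ρ b
  | i, ρ, .not a => ¬ Sat F R h i ρ a
  | i, ρ, .prev a => 1 < i ∧ Sat F R h (i - 1) ρ a
  | i, ρ, .since a b =>
      ∃ j, 1 ≤ j ∧ j ≤ i ∧ Sat F R h j ρ b ∧ ∀ k, j < k → k ≤ i → Sat F R h k ρ a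
  | i, ρ, .all xs p a =>
      ∀ cs : List C, cs.length = xs.length → (p, cs) ∈ h.getD (i - 1) ∅ →
        Sat F R h i (updEnv ρ xs cs) a

/-- A tautology `⊤` (definable from the connectives: `¬(p ∧ ¬p)`). -/
def fmTop {C : Type} : Fm C := .not (.and (.atom 0 []) (.not (.atom 0 [])))

/-- `F⁻¹ψ := ⊤ S ψ` ("sometime in the past"). -/
def fmSometime {C : Type} (a : Fm C) : Fm C := .since fmTop a

/-- `G⁻¹ψ := ¬F⁻¹¬ψ` ("always in the past"). -/
def fmAlways {C : Type} (a : Fm C) : Fm C := .not (fmSometime (.not a))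

/-- Boolean expressions over variables (named by natural numbers). -/
inductive BExpr : Type where
  | var : ℕ → BExpr
  | and : BExpr → BExpr → BExpr
  | or : BExpr → BExpr → BExpr
  | not : BExpr → BExpr

/-- Evaluation of a Boolean expression under an assignment. -/
def BExpr.eval (v : ℕ → Bool) : BExpr → Bool
  | .var x => v x
  | .and a b => a.eval v && b.eval v
  | .or a b => a.eval v || b.eval v
  | .not a => !(a.eval v)

/-- Variables of a Boolean expression. -/
def BExpr.vars : BExpr → List ℕ
  | .var x => [x]
  | .and a b => a.vars ++ b.vars
  | .or a b => a.vars ++ b.vars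
  | .not a => a.vars

/-- Standard QBF semantics of the prenex formula `Q₁x_k. Q₂x_{k+1}. … E`;
the quantifier prefix is given as a list of Booleans (`true` = ∀, `false` = ∃), and
the variable quantified at position `j` of the prefix is `x_{k+j}`. -/
def QbfTrue (v : ℕ → Bool) : ℕ → List Bool → BExpr → Prop
  | _, [], E => E.eval v = true
  | k, q :: qs, E =>
      if q then ∀ b : Bool, QbfTrue (fun m => if m = k then b else v m) (k + 1) qs E
      else ∃ b : Bool, QbfTrue (fun m => if m = k then b else v m) (k + 1) qs E

/-- Translation of the matrix: each variable `xᵢ` is replaced by the atom `true(xᵢ)`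
(the predicate `true` is predicate symbol `0`); disjunction is the derived connective. -/
def trE : BExpr → Fm ℕ
  | .var x => .atom 0 [.var x]
  | .and a b => .and (trE a) (trE b)
  | .or a b => .not (.and (.not (trE a)) (.not (trE b)))
  | .not a => .not (trE a)

/-- Translation of the prefix: `Qᵢxᵢ` becomes `TᵢQᵢxᵢ:pᵢ` where `Tᵢ = G⁻¹` if `Qᵢ = ∀`
and `Tᵢ = F⁻¹` if `Qᵢ = ∃` (predicate `pᵢ` is predicate symbol `i`, `∃x:p.ψ := ¬∀x:p.¬ψ`). -/
def trQ : ℕ → List Bool → BExpr → Fm ℕ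
  | _, [], E => trE E
  | k, q :: qs, E =>
      if q then fmAlways (.all [k] k (trQ (k + 1) qs E))
      else fmSometime (.not (.all [k] k (.not (trQ (k + 1) qs E))))

/-- The history of `2n` sessions
`{pₙ(0), true(1)}; {pₙ(1), true(1)}; … ; {p₁(0), true(1)}; {p₁(1), true(1)}`
(the predicate `true` is predicate symbol `0`, `pᵢ` is predicate symbol `i`). -/
def qbfHistory (n : ℕ) : History ℕ :=
  (List.range n).reverse.flatMap fun j =>
    [({(j + 1, [0]), (0, [1])} : Session ℕ), ({(j + 1, [1]), (0, [1])} : Session ℕ)]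

/-- A history is trace-like if no predicate occurs with two distinct argument tuples
in a single session. -/
def TraceLike {C : Type} (h : History C) : Prop :=
  ∀ i, 1 ≤ i → i ≤ h.length → ∀ p (t s : List C),
    (p, t) ∈ h.getD (i - 1) ∅ → (p, s) ∈ h.getD (i - 1) ∅ → t = s


lemma qbfHistory_succ (n : ℕ) :
    qbfHistory (n+1) = ({(n + 1, [0]), (0, [1])} : Session ℕ) ::
      ({(n + 1, [1]), (0, [1])} : Session ℕ) :: qbfHistory n := by
  simp [qbfHistory, List.range_succ]

lemma qbfHistory_length (n : ℕ) : (qbfHistory n).length = 2 * n := by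
  induction n with
  | zero => rfl
  | succ n ih => rw [qbfHistory_succ]; simp [ih]; ring

lemma qbfHistory_getD (n m : ℕ) (h : m < 2 * n) :
    (qbfHistory n).getD m ∅ = ({(n - m/2, [m % 2]), (0, [1])} : Session ℕ) := by
  induction n generalizing m with
  | zero => omega
  | succ n ih =>
    rw [qbfHistory_succ]
    match m with
    | 0 => simp
    | 1 => simp
    | (m+2) =>
      simp only [List.getD_cons_succ]
      rw [ih m (by omega)]
      have h1 : n + 1 - (m+2)/2 = n - m/2 := by omega
      have h2 : (m+2) % 2 = m % 2 := by omega
      rw [h1, h2]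

lemma mem_qbfHistory (n m : ℕ) (h : m < 2 * n) (p : ℕ) (cs : List ℕ) :
    ((p, cs) ∈ (qbfHistory n).getD m ∅) ↔
      (p = n - m/2 ∧ cs = [m % 2]) ∨ (p = 0 ∧ cs = [1]) := by
  rw [qbfHistory_getD n m h]
  simp [Prod.ext_iff]

lemma tracelike_qbfHistory (n : ℕ) : TraceLike (qbfHistory n) := by
  intro i h1 h2 p t s ht hs
  rw [qbfHistory_length] at h2
  rw [mem_qbfHistory n (i-1) (by omega)] at ht hs
  rcases ht with ⟨hp, ht⟩ | ⟨hp, ht⟩ <;> rcases hs with ⟨hq, hs⟩ | ⟨hq, hs⟩ <;>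
    first | (subst ht hs; rfl) | omega

lemma updEnv_single (ρ : ℕ → ℕ) (k c m : ℕ) :
    updEnv ρ [k] [c] m = if m = k then c else ρ m := by
  by_cases h : m = k
  · simp [updEnv, List.lookup, h]
  · have hb : (m == k) = false := by simp [h]
    simp [updEnv, List.lookup, hb, h]

lemma tmEval_var (F : ℕ → List ℕ → ℕ) (ρ : ℕ → ℕ) (x : ℕ) :
    Tm.eval F ρ (Tm.var x) = ρ x := by rw [Tm.eval]

lemma sat_fmTop (F : ℕ → List ℕ → ℕ) (R : ℕ → List ℕ → Bool) (h : History ℕ)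
    (i : ℕ) (ρ : ℕ → ℕ) : Sat F R h i ρ (fmTop : Fm ℕ) := by
  simp [Sat, fmTop]

lemma sat_fmSometime {F : ℕ → List ℕ → ℕ} {R : ℕ → List ℕ → Bool} {h : History ℕ}
    {i : ℕ} {ρ : ℕ → ℕ} (a : Fm ℕ) :
    Sat F R h i ρ (fmSometime a) ↔ ∃ j, 1 ≤ j ∧ j ≤ i ∧ Sat F R h j ρ a := by
  simp only [fmSometime, Sat]
  constructor
  · rintro ⟨j, h1, h2, h3, -⟩; exact ⟨j, h1, h2, h3⟩
  · rintro ⟨j, h1, h2, h3⟩; exact ⟨j, h1, h2, h3, fun k _ _ => sat_fmTop F R h k ρ⟩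

lemma sat_trE (n : ℕ) (F : ℕ → List ℕ → ℕ) (R : ℕ → List ℕ → Bool) (E : BExpr)
    (i : ℕ) (ρ : ℕ → ℕ) (h1 : 1 ≤ i) (h2 : i ≤ 2 * n) :
    Sat F R (qbfHistory n) i ρ (trE E) ↔
      BExpr.eval (fun m => decide (ρ m = 1)) E = true := by
  induction E with
  | var x =>
    simp only [trE, Sat, BExpr.eval, List.map, tmEval_var]
    rw [mem_qbfHistory n (i-1) (by omega)]
    constructor
    · rintro (⟨hp, hc⟩ | ⟨-, hc⟩)
      · simp only [List.cons.injEq, and_true] at hc; omega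
      · simp only [List.cons.injEq, and_true] at hc; simp [hc]
    · intro hv
      right
      simp only [decide_eq_true_eq] at hv
      simp [hv]
  | and a b iha ihb => simp only [trE, Sat, BExpr.eval]; rw [iha, ihb]; simp
  | or a b iha ihb =>
    simp only [trE, Sat, BExpr.eval]; rw [iha, ihb]
    simp only [Bool.or_eq_true]; tauto
  | not a iha => simp only [trE, Sat, BExpr.eval]; rw [iha]; simp


lemma sat_not {F : ℕ → List ℕ → ℕ} {R : ℕ → List ℕ → Bool} {h : History ℕ}
    {i : ℕ} {ρ : ℕ → ℕ} (a : Fm ℕ) :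
    Sat F R h i ρ (.not a) ↔ ¬ Sat F R h i ρ a := by simp [Sat]

lemma sat_all1 {F : ℕ → List ℕ → ℕ} {R : ℕ → List ℕ → Bool} {h : History ℕ}
    {i : ℕ} {ρ : ℕ → ℕ} (k : ℕ) (a : Fm ℕ) :
    Sat F R h i ρ (.all [k] k a) ↔
      ∀ cs : List ℕ, cs.length = 1 → (k, cs) ∈ h.getD (i-1) ∅ →
        Sat F R h i (updEnv ρ [k] cs) a := by simp [Sat]

lemma sat_trQ (n : ℕ) (F : ℕ → List ℕ → ℕ) (R : ℕ → List ℕ → Bool) (E : BExpr) :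
    ∀ (qs : List Bool) (k : ℕ), 1 ≤ k → k + qs.length = n + 1 →
    ∀ i, 2 * (n + 1 - k) ≤ i → i ≤ 2 * n → 1 ≤ i → ∀ ρ : ℕ → ℕ,
    (Sat F R (qbfHistory n) i ρ (trQ k qs E) ↔
      QbfTrue (fun m => decide (ρ m = 1)) k qs E) := by
  intro qs
  induction qs with
  | nil =>
    intro k hk hlen i hi1 hi2 hi3 ρ
    simp only [trQ, QbfTrue]
    exact sat_trE n F R E i ρ hi3 hi2
  | cons q qs ih =>
    intro k hk hlen i hi1 hi2 hi3 ρ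
    have hkn : k ≤ n := by simp only [List.length_cons] at hlen; omega
    have hlen' : (k+1) + qs.length = n + 1 := by
      simp only [List.length_cons] at hlen; omega
    have hmemc : ∀ (j : ℕ) (cs : List ℕ), 1 ≤ j → j ≤ i →
        (((k, cs) : ℕ × List ℕ) ∈ (qbfHistory n).getD (j-1) ∅ ↔
          (j = 2*(n-k)+1 ∧ cs = [0]) ∨ (j = 2*(n-k)+2 ∧ cs = [1])) := by
      intro j cs hj1 hj2
      rw [mem_qbfHistory n (j-1) (by omega)]
      constructor
      · rintro (⟨hp, hc⟩ | ⟨hp, -⟩)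
        · have h2 : (j-1) % 2 = 0 ∨ (j-1) % 2 = 1 := by omega
          rcases h2 with h2 | h2
          · left; exact ⟨by omega, by rw [hc, h2]⟩
          · right; exact ⟨by omega, by rw [hc, h2]⟩
        · omega
      · rintro (⟨hj, hc⟩ | ⟨hj, hc⟩) <;> subst hj <;> left
        · exact ⟨by omega, by rw [hc]; congr 1; omega⟩
        · exact ⟨by omega, by rw [hc]; congr 1; omega⟩
    have hupd0 : (fun m => decide (updEnv ρ [k] [(0:ℕ)] m = 1)) =
        (fun m => if m = k then false else decide (ρ m = 1)) := by
      funext m; rw [updEnv_single]; split <;> simp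
    have hupd1 : (fun m => decide (updEnv ρ [k] [(1:ℕ)] m = 1)) =
        (fun m => if m = k then true else decide (ρ m = 1)) := by
      funext m; rw [updEnv_single]; split <;> simp
    have ih0 := ih (k+1) (by omega) hlen' (2*(n-k)+1) (by omega) (by omega) (by omega)
        (updEnv ρ [k] [0])
    have ih1 := ih (k+1) (by omega) hlen' (2*(n-k)+2) (by omega) (by omega) (by omega)
        (updEnv ρ [k] [1])
    rw [hupd0] at ih0
    rw [hupd1] at ih1
    cases q with
    | true =>
      have hiff : Sat F R (qbfHistory n) i ρ (trQ k (true :: qs) E) ↔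
          ∀ j, 1 ≤ j → j ≤ i → ∀ cs : List ℕ, cs.length = 1 →
            ((k, cs) : ℕ × List ℕ) ∈ (qbfHistory n).getD (j-1) ∅ →
            Sat F R (qbfHistory n) j (updEnv ρ [k] cs) (trQ (k+1) qs E) := by
        simp only [trQ, if_true, fmAlways, sat_not, sat_fmSometime]
        simp only [sat_all1, not_exists, not_and, not_not]
      rw [hiff]
      show _ ↔ QbfTrue _ k (true :: qs) E
      simp only [QbfTrue, if_true]
      rw [Bool.forall_bool]
      constructor
      · intro H
        constructor
        · exact ih0.mp (H (2*(n-k)+1) (by omega) (by omega) [0] rfl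
            ((hmemc _ _ (by omega) (by omega)).mpr (Or.inl ⟨rfl, rfl⟩)))
        · exact ih1.mp (H (2*(n-k)+2) (by omega) (by omega) [1] rfl
            ((hmemc _ _ (by omega) (by omega)).mpr (Or.inr ⟨rfl, rfl⟩)))
      · rintro ⟨H0, H1⟩ j hj1 hj2 cs hcs hmem
        rcases (hmemc j cs hj1 hj2).mp hmem with ⟨hj, hc⟩ | ⟨hj, hc⟩ <;> subst hj <;> subst hc
        · exact ih0.mpr H0
        · exact ih1.mpr H1
    | false =>
      have hiff : Sat F R (qbfHistory n) i ρ (trQ k (false :: qs) E) ↔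
          ∃ j, ∃ cs : List ℕ, 1 ≤ j ∧ j ≤ i ∧ cs.length = 1 ∧
            ((k, cs) : ℕ × List ℕ) ∈ (qbfHistory n).getD (j-1) ∅ ∧
            Sat F R (qbfHistory n) j (updEnv ρ [k] cs) (trQ (k+1) qs E) := by
        simp only [trQ, Bool.false_eq_true, if_false, sat_fmSometime, sat_not, sat_all1]
        constructor
        · rintro ⟨j, hj1, hj2, hn⟩
          push_neg at hn
          obtain ⟨cs, hcs, hmem, hsat⟩ := hn
          exact ⟨j, cs, hj1, hj2, hcs, hmem, hsat⟩
        · rintro ⟨j, cs, hj1, hj2, hcs, hmem, hsat⟩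
          exact ⟨j, hj1, hj2, fun hall => (hall cs hcs hmem) hsat⟩
      rw [hiff]
      show _ ↔ QbfTrue _ k (false :: qs) E
      simp only [QbfTrue, if_false]
      rw [Bool.exists_bool]
      constructor
      · rintro ⟨j, cs, hj1, hj2, hcs, hmem, hsat⟩
        rcases (hmemc j cs hj1 hj2).mp hmem with ⟨hj, hc⟩ | ⟨hj, hc⟩ <;> subst hj <;> subst hc
        · exact Or.inl (ih0.mp hsat)
        · exact Or.inr (ih1.mp hsat)
      · rintro (H | H)
        · exact ⟨2*(n-k)+1, [0], by omega, by omega, rfl,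
            (hmemc _ _ (by omega) (by omega)).mpr (Or.inl ⟨rfl, rfl⟩), ih0.mpr H⟩
        · exact ⟨2*(n-k)+2, [1], by omega, by omega, rfl,
            (hmemc _ _ (by omega) (by omega)).mpr (Or.inr ⟨rfl, rfl⟩), ih1.mpr H⟩

/-- For a closed prenex QBF `F ≡ Q₁x₁.…Qₙxₙ.E(x₁,…,xₙ)`, with `φ` the
PTLTL^FO formula `T₁Q₁x₁:p₁.…TₙQₙxₙ:pₙ. E(true(x₁),…,true(xₙ))` (`Tᵢ = G⁻¹` for `∀`,
`Tᵢ = F⁻¹` for `∃`) and `h` the history of `2n` sessions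
`{pₙ(0),true(1)}; {pₙ(1),true(1)}; …; {p₁(0),true(1)}; {p₁(1),true(1)}`:
`h` is trace-like, and `F` is true iff `h ⊨ φ`. -/
theorem qbf_reduction_tracelike (Q : List Bool) (hQ : Q ≠ [])
    (E : BExpr) (hclosed : ∀ x ∈ E.vars, 1 ≤ x ∧ x ≤ Q.length)
    (F : ℕ → List ℕ → ℕ) (R : ℕ → List ℕ → Bool) :
    TraceLike (qbfHistory Q.length) ∧
      ((∀ v : ℕ → Bool, QbfTrue v 1 Q E) ↔
        (∀ ρ : ℕ → ℕ, Sat F R (qbfHistory Q.length) (qbfHistory Q.length).length ρ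
          (trQ 1 Q E))) := by
  refine ⟨tracelike_qbfHistory _, ?_⟩
  have hn : 1 ≤ Q.length := List.length_pos_iff.mpr hQ
  rw [qbfHistory_length]
  have key := fun ρ => sat_trQ Q.length F R E Q 1 le_rfl (by omega) (2 * Q.length)
    (by omega) le_rfl (by omega) ρ
  constructor
  · intro hv ρ
    exact (key ρ).mpr (hv _)
  · intro hs v
    have h2 := (key (fun m => if v m then 1 else 0)).mp (hs _)
    have hfe : (fun m => decide ((if v m then 1 else 0) = 1)) = v := by
      funext m; cases hvm : v m <;> simp [hvm]
    rwa [hfe] at h2
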